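/- For fixed γ ∈ [0,1] and 0 < q < 1/2, the function q ↦ q'(q)/q is strictly increasing on (0, 1/2), where q' = (q(1−q)²(4q + γ(1−2q)) − q³)/(1 − q(1 + q(2−q))). Equivalently, ∂q'/∂q > q'/q on (0,1/2). -/

import Mathlib

noncomputable def apparentHashrate (γ q : ℝ) : ℝ :=
  (q * (1 - q) ^ 2 * (4 * q + γ * (1 - 2 * q)) - q ^ 3) / (1 - q * (1 + q * (2 - q)))

section aux
variable (γ : ℝ)

/-- numerator derivative -/
lemma ah_hasDerivAt_num (q : ℝ) :
    HasDerivAt (fun q : ℝ => q * (1 - q) ^ 2 * (4 * q + γ * (1 - 2 * q)) - q ^ 3)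
      ((1 - q) ^ 2 * (4 * q + γ * (1 - 2 * q))
        + q * (2 * (1 - q) * (-1)) * (4 * q + γ * (1 - 2 * q))
        + q * (1 - q) ^ 2 * (4 - 2 * γ) - 3 * q ^ 2) q := by
  have h1 : HasDerivAt (fun q : ℝ => q) 1 q := hasDerivAt_id q
  have h2 : HasDerivAt (fun q : ℝ => (1 - q) ^ 2) (2 * (1 - q) ^ 1 * (0 - 1)) q :=
    ((hasDerivAt_const q (1:ℝ)).sub h1).pow 2
  have h3 : HasDerivAt (fun q : ℝ => 4 * q + γ * (1 - 2 * q)) (4 * 1 + γ * (0 - 2 * 1)) q :=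
    (h1.const_mul 4).add (((hasDerivAt_const q (1:ℝ)).sub (h1.const_mul 2)).const_mul γ)
  have h4 : HasDerivAt (fun q : ℝ => q ^ 3) (3 * q ^ 2 * 1) q := h1.pow 3
  have := ((h1.mul h2).mul h3).sub h4
  refine this.congr_deriv ?_
  simp only [Pi.mul_apply]
  ring

lemma ah_hasDerivAt_den (q : ℝ) :
    HasDerivAt (fun q : ℝ => 1 - q * (1 + q * (2 - q)))
      (-(1 + q * (2 - q)) - q * (2 - 2 * q)) q := by
  have h1 : HasDerivAt (fun q : ℝ => q) 1 q := hasDerivAt_id q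
  have h5 : HasDerivAt (fun q : ℝ => q * (2 - q)) (1 * (2 - q) + q * (0 - 1)) q :=
    h1.mul ((hasDerivAt_const q (2:ℝ)).sub h1)
  have h6 : HasDerivAt (fun q : ℝ => 1 + q * (2 - q)) (0 + (1 * (2 - q) + q * (0 - 1))) q :=
    (hasDerivAt_const q (1:ℝ)).add h5
  have h7 : HasDerivAt (fun q : ℝ => q * (1 + q * (2 - q)))
      (1 * (1 + q * (2 - q)) + q * (0 + (1 * (2 - q) + q * (0 - 1)))) q := h1.mul h6
  have := (hasDerivAt_const q (1:ℝ)).sub h7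
  refine this.congr_deriv ?_
  ring

lemma ah_den_pos {q : ℝ} (h0 : 0 < q) (h2 : q < 1/2) : 0 < 1 - q * (1 + q * (2 - q)) := by
  nlinarith [sq_nonneg q, mul_pos h0 h0]

lemma ah_key (hγ0 : 0 ≤ γ) (hγ1 : γ ≤ 1) {q : ℝ} (h0 : 0 < q) (h2 : q < 1/2) :
    0 < 4 - 3*γ + (-18 + 14*γ)*q + (29 - 22*γ)*q^2 + (-16 + 12*γ)*q^3 + (1 - γ)*q^4 := by
  nlinarith [sq_nonneg q, sq_nonneg (1 - 2*q), mul_nonneg hγ0 h0.le, sq_nonneg (q - 1),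
    mul_nonneg (sub_nonneg.2 hγ1) (sq_nonneg q), mul_nonneg (sub_nonneg.2 hγ1) h0.le,
    mul_pos h0 h0, mul_nonneg (mul_nonneg hγ0 h0.le) h0.le]

/-- the derivative of `apparentHashrate γ`. -/
lemma ah_hasDerivAt {q : ℝ} (h0 : 0 < q) (h2 : q < 1/2) :
    HasDerivAt (apparentHashrate γ)
      ((((1 - q) ^ 2 * (4 * q + γ * (1 - 2 * q))
        + q * (2 * (1 - q) * (-1)) * (4 * q + γ * (1 - 2 * q))
        + q * (1 - q) ^ 2 * (4 - 2 * γ) - 3 * q ^ 2) * (1 - q * (1 + q * (2 - q)))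
        - (q * (1 - q) ^ 2 * (4 * q + γ * (1 - 2 * q)) - q ^ 3)
          * (-(1 + q * (2 - q)) - q * (2 - 2 * q)))
        / (1 - q * (1 + q * (2 - q))) ^ 2) q := by
  exact (ah_hasDerivAt_num γ q).div (ah_hasDerivAt_den q) (ah_den_pos h0 h2).ne'

end aux

theorem apparent_hashrate_ratio_strictMono
    (γ : ℝ) (hγ0 : 0 ≤ γ) (hγ1 : γ ≤ 1) :
    StrictMonoOn (fun q => apparentHashrate γ q / q) (Set.Ioo (0 : ℝ) (1/2)) ∧
    ∀ q ∈ Set.Ioo (0 : ℝ) (1/2),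
      deriv (apparentHashrate γ) q > apparentHashrate γ q / q := by
  -- derivative of the ratio is positive on the interval
  have hratio : ∀ q ∈ Set.Ioo (0 : ℝ) (1/2),
      HasDerivAt (fun q => apparentHashrate γ q / q)
        (((((1 - q) ^ 2 * (4 * q + γ * (1 - 2 * q))
          + q * (2 * (1 - q) * (-1)) * (4 * q + γ * (1 - 2 * q))
          + q * (1 - q) ^ 2 * (4 - 2 * γ) - 3 * q ^ 2) * (1 - q * (1 + q * (2 - q)))
          - (q * (1 - q) ^ 2 * (4 * q + γ * (1 - 2 * q)) - q ^ 3)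
            * (-(1 + q * (2 - q)) - q * (2 - 2 * q)))
          / (1 - q * (1 + q * (2 - q))) ^ 2 * q - apparentHashrate γ q * 1) / q ^ 2) q := by
    intro q hq
    exact (ah_hasDerivAt γ hq.1 hq.2).div (hasDerivAt_id q) hq.1.ne'
  have hpos : ∀ q ∈ Set.Ioo (0 : ℝ) (1/2),
      0 < ((((1 - q) ^ 2 * (4 * q + γ * (1 - 2 * q))
          + q * (2 * (1 - q) * (-1)) * (4 * q + γ * (1 - 2 * q))
          + q * (1 - q) ^ 2 * (4 - 2 * γ) - 3 * q ^ 2) * (1 - q * (1 + q * (2 - q)))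
          - (q * (1 - q) ^ 2 * (4 * q + γ * (1 - 2 * q)) - q ^ 3)
            * (-(1 + q * (2 - q)) - q * (2 - 2 * q)))
          / (1 - q * (1 + q * (2 - q))) ^ 2 * q - apparentHashrate γ q * 1) / q ^ 2 := by
    intro q hq
    obtain ⟨h0, h2⟩ := hq
    have hD := ah_den_pos h0 h2
    have hE := ah_key γ hγ0 hγ1 h0 h2
    have heq : ((((1 - q) ^ 2 * (4 * q + γ * (1 - 2 * q))
          + q * (2 * (1 - q) * (-1)) * (4 * q + γ * (1 - 2 * q))
          + q * (1 - q) ^ 2 * (4 - 2 * γ) - 3 * q ^ 2) * (1 - q * (1 + q * (2 - q)))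
          - (q * (1 - q) ^ 2 * (4 * q + γ * (1 - 2 * q)) - q ^ 3)
            * (-(1 + q * (2 - q)) - q * (2 - 2 * q)))
          / (1 - q * (1 + q * (2 - q))) ^ 2 * q - apparentHashrate γ q * 1) / q ^ 2
        = (4 - 3*γ + (-18 + 14*γ)*q + (29 - 22*γ)*q^2 + (-16 + 12*γ)*q^3 + (1 - γ)*q^4)
          / (1 - q * (1 + q * (2 - q))) ^ 2 := by
      rw [apparentHashrate]
      field_simp
      ring
    rw [heq]
    exact div_pos hE (pow_pos hD 2)
  constructor
  · apply strictMonoOn_of_deriv_pos (convex_Ioo _ _)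
    · exact fun q hq => (hratio q hq).continuousAt.continuousWithinAt
    · intro q hq
      rw [interior_Ioo] at hq
      rw [(hratio q hq).deriv]
      exact hpos q hq
  · intro q hq
    obtain ⟨h0, h2⟩ := hq
    have hd := (ah_hasDerivAt γ h0 h2).deriv
    rw [hd]
    have hp := hpos q ⟨h0, h2⟩
    have := hratio q ⟨h0, h2⟩
    -- from hp: (D * q - A)/q² > 0 where D is the derivative value
    rw [gt_iff_lt, div_lt_iff₀ h0]
    have h0' : (0:ℝ) < q ^ 2 := pow_pos h0 2
    have h := mul_pos hp h0'
    rw [div_mul_cancel₀ _ h0'.ne'] at h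
    linarith
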